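/- Fix 0 < ε < 1 and a > 0, let Ω = [−a, a] and Ω_n = (1 − ε^n)Ω for n ≥ 1, so |Ω_n| = 2a(1 − ε^n). For each n ≥ 1 define ψ̂_n : ℝ → ℝ by the infinite product ψ̂_n(t) = Π_{s=0}^{∞} sinc(t · ε^{ns} |Ω_n|), where sinc(u) = sin(πu)/(πu) for u ≠ 0 and sinc(0) = 1. Then each infinite product converges for every t, and the sequence of functions ψ̂_n converges uniformly on ℝ as n → ∞ to the function t ↦ sinc(2a t), which is |Ω|^{-1} times the Fourier transform of the indicator function of Ω. -/

import Mathlib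

open MeasureTheory Filter Complex
open scoped Topology ENNReal NNReal Real

noncomputable section

namespace ModelSets

variable {m : ℕ}

/-- Translation operator `T_λ g (t) = g (t - λ)`. -/
def Tr (lam : Fin m → ℝ) (g : (Fin m → ℝ) → ℂ) : (Fin m → ℝ) → ℂ := fun t => g (t - lam)

/-- Euclidean dot product on `ℝ^m`. -/
def dotm (x y : Fin m → ℝ) : ℝ := ∑ i, x i * y i

/-- Modulation operator `M_β g (t) = e^{2πi β·t} g(t)`. -/
def Mod (β : Fin m → ℝ) (g : (Fin m → ℝ) → ℂ) : (Fin m → ℝ) → ℂ :=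
  fun t => Complex.exp (2 * Real.pi * Complex.I * (dotm β t : ℝ)) * g t

/-- `L²` inner product `⟨f, g⟩ = ∫ f conj(g)`. -/
def ip (f g : (Fin m → ℝ) → ℂ) : ℂ := ∫ t, f t * (starRingEnd ℂ) (g t)

/-- Square of the `L²` norm. -/
def norm2sq (f : (Fin m → ℝ) → ℂ) : ℝ := ∫ t, ‖f t‖ ^ 2

/-- Fourier transform on `ℝ^m`: `f̂(ω) = ∫ f(t) e^{-2πi t·ω} dt`. -/
def FT (f : (Fin m → ℝ) → ℂ) : (Fin m → ℝ) → ℂ :=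
  fun ω => ∫ t, f t * Complex.exp (-(2 * Real.pi * Complex.I) * (dotm t ω : ℝ))

/-- Fourier transform of a real-valued function on `ℝ`. -/
def FT1 (ψ : ℝ → ℝ) : ℝ → ℂ :=
  fun ω => ∫ t, (ψ t : ℂ) * Complex.exp (-(2 * Real.pi * Complex.I) * (t * ω : ℝ))

/-- Wiener amalgam space `W(L^p, ℓ¹)` on `ℝ^m`. -/
def MemW (p : ℝ≥0∞) (F : (Fin m → ℝ) → ℂ) : Prop :=
  (∑' k : Fin m → ℤ,
    eLpNorm (Set.indicator {t : Fin m → ℝ | ∀ i, (k i : ℝ) ≤ t i ∧ t i < k i + 1} F) p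
      volume) ≠ ⊤

/-- `Λ` is relatively separated with constant `C`:
every unit cube contains at most `C` points of `Λ`. -/
def RelSep (Λ : Set (Fin m → ℝ)) (C : ℕ) : Prop :=
  ∀ x : Fin m → ℝ,
    {lam ∈ Λ | ∀ i, x i ≤ lam i ∧ lam i ≤ x i + 1}.Finite ∧
    {lam ∈ Λ | ∀ i, x i ≤ lam i ∧ lam i ≤ x i + 1}.ncard ≤ C

/-- `Λ` is relatively separated. -/
def IsRelSep (Λ : Set (Fin m → ℝ)) : Prop := ∃ C : ℕ, RelSep Λ C

/-- `{T_λ g_k : k ∈ K, λ ∈ Λ}` is a Bessel sequence with bound `B`. -/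
def IsBessel {K : Type*} (g : K → (Fin m → ℝ) → ℂ) (Λ : Set (Fin m → ℝ)) (B : ℝ) : Prop :=
  ∀ f : (Fin m → ℝ) → ℂ, MemLp f 2 volume →
    ∑' p : K × Λ, ‖ip f (Tr p.2.1 (g p.1))‖ ^ 2 ≤ B * norm2sq f

/-- `{T_λ g_k : k ∈ K, λ ∈ Λ}` is a frame with bounds `A`, `B`. -/
def IsFrame {K : Type*} (g : K → (Fin m → ℝ) → ℂ) (Λ : Set (Fin m → ℝ)) (A B : ℝ) : Prop :=
  ∀ f : (Fin m → ℝ) → ℂ, MemLp f 2 volume →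
    A * norm2sq f ≤ ∑' p : K × Λ, ‖ip f (Tr p.2.1 (g p.1))‖ ^ 2 ∧
      ∑' p : K × Λ, ‖ip f (Tr p.2.1 (g p.1))‖ ^ 2 ≤ B * norm2sq f

/-- Dot product (pairing) on `ℝ^m × ℝ`. -/
def dotE (p q : (Fin m → ℝ) × ℝ) : ℝ := dotm p.1 q.1 + p.2 * q.2

/-- The dual lattice `Γ* = {η : γ·η ∈ ℤ for all γ ∈ Γ}`, as a set. -/
def dualSet (Γ : Submodule ℤ ((Fin m → ℝ) × ℝ)) : Set ((Fin m → ℝ) × ℝ) :=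
  {η | ∀ γ ∈ Γ, ∃ z : ℤ, dotE γ η = (z : ℝ)}

/-- The model set `Λ(Ω) = {p₁(γ) : γ ∈ Γ, p₂(γ) ∈ Ω}`. -/
def modelSet (Γ : Submodule ℤ ((Fin m → ℝ) × ℝ)) (Ω : Set ℝ) : Set (Fin m → ℝ) :=
  {x | ∃ γ ∈ (Γ : Set ((Fin m → ℝ) × ℝ)), γ.2 ∈ Ω ∧ γ.1 = x}

open scoped Classical in
/-- The weight `w_ψ(λ) = ψ(p₂ γ)` for `λ = p₁ γ`, `γ ∈ Γ` (and `0` if `λ ∉ p₁(Γ)`).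
Well defined (independent of the choice of `γ`) when `p₁` is injective on `Γ`. -/
def wpsi (Γ : Submodule ℤ ((Fin m → ℝ) × ℝ)) (ψ : ℝ → ℝ) (lam : Fin m → ℝ) : ℝ :=
  if h : ∃ γ : (Fin m → ℝ) × ℝ, γ ∈ Γ ∧ γ.1 = lam then ψ h.choose.2 else 0

/-- The covolume `vol(Γ)` of the lattice `Γ ⊂ ℝ^m × ℝ`. -/
def covol (Γ : Submodule ℤ ((Fin m → ℝ) × ℝ)) : ℝ := ZLattice.covolume Γ volume

/-- The `ψ`-bracket product
`[f̂,ĝ]^ψ(t) = Σ_{η ∈ Γ*} vol(Γ)⁻¹ ψ̂(−p₂*(η)) f̂(t − p₁*(η)) conj(ĝ(t − p₁*(η)))`. -/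
def bracket (Γ : Submodule ℤ ((Fin m → ℝ) × ℝ)) (ψ : ℝ → ℝ)
    (f g : (Fin m → ℝ) → ℂ) (t : Fin m → ℝ) : ℂ :=
  ∑' η : dualSet Γ,
    ((covol Γ)⁻¹ : ℂ) * FT1 ψ (-(η : (Fin m → ℝ) × ℝ).2) *
      FT f (t - (η : (Fin m → ℝ) × ℝ).1) *
      (starRingEnd ℂ) (FT g (t - (η : (Fin m → ℝ) × ℝ).1))

/-- The cube `[0,R]^m`. -/
def cube (m : ℕ) (R : ℝ) : Set (Fin m → ℝ) := {t | ∀ i, 0 ≤ t i ∧ t i ≤ R}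

/-- `F` has mean value `c`: `R^{-m} ∫_{[0,R]^m} F → c` as `R → ∞`. -/
def MeanTendsto (F : (Fin m → ℝ) → ℂ) (c : ℂ) : Prop :=
  Tendsto (fun R : ℝ => (R ^ m)⁻¹ • ∫ t in cube m R, F t) atTop (𝓝 c)

/-- Bohr almost periodic function on `ℝ^m`. -/
def BohrAP (F : (Fin m → ℝ) → ℂ) : Prop :=
  Continuous F ∧ (∃ C : ℝ, ∀ t, ‖F t‖ ≤ C) ∧
    ∀ ε > (0 : ℝ), ∃ r > (0 : ℝ), ∀ x : Fin m → ℝ, ∃ τ : Fin m → ℝ,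
      (∀ i, x i ≤ τ i ∧ τ i ≤ x i + r) ∧ ∀ t, ‖F (t + τ) - F t‖ ≤ ε

/-- Bohr almost periodic function on `ℝ^m × ℝ^m`. -/
def BohrAP2 (F : (Fin m → ℝ) × (Fin m → ℝ) → ℂ) : Prop :=
  Continuous F ∧ (∃ C : ℝ, ∀ t, ‖F t‖ ≤ C) ∧
    ∀ ε > (0 : ℝ), ∃ r > (0 : ℝ), ∀ x : (Fin m → ℝ) × (Fin m → ℝ),
      ∃ τ : (Fin m → ℝ) × (Fin m → ℝ),
        (∀ i, x.1 i ≤ τ.1 i ∧ τ.1 i ≤ x.1 i + r) ∧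
        (∀ i, x.2 i ≤ τ.2 i ∧ τ.2 i ≤ x.2 i + r) ∧
        ∀ t, ‖F (t + τ) - F t‖ ≤ ε

/-- The normalized sinc function `sinc(u) = sin(πu)/(πu)`, `sinc 0 = 1`. -/
def sinc (u : ℝ) : ℝ := if u = 0 then 1 else Real.sin (Real.pi * u) / (Real.pi * u)

/-- `Φ(t) = sin(π|Ω|t)/(π|Ω|t)` for `Ω = [-a,a]`, i.e. `|Ω|⁻¹` times the Fourier
transform of the indicator of `Ω`. -/
def Phi (a : ℝ) (t : ℝ) : ℝ := sinc (2 * a * t)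

/-- The density `D(Λ(Ω)) = vol(Γ)⁻¹ |Ω|` of the simple model set with window `Ω = [-a,a]`. -/
def density (Γ : Submodule ℤ ((Fin m → ℝ) × ℝ)) (a : ℝ) : ℝ := (covol Γ)⁻¹ * (2 * a)

end ModelSets

open ModelSets MeasureTheory Filter

namespace Statement10Aux

lemma sinc_zero : sinc 0 = 1 := by simp [ModelSets.sinc]


lemma cos_dist (x y : ℝ) : |Real.cos x - Real.cos y| ≤ |x - y| := by
  rw [Real.cos_sub_cos]
  have h1 : |Real.sin ((x+y)/2)| ≤ 1 := Real.abs_sin_le_one _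
  have h2 : |Real.sin ((x-y)/2)| ≤ |x - y|/2 := by
    calc |Real.sin ((x-y)/2)| ≤ |(x-y)/2| := Real.abs_sin_le_abs
      _ = |x - y|/2 := by rw [abs_div]; norm_num
  calc |(-2) * Real.sin ((x+y)/2) * Real.sin ((x-y)/2)|
      = 2 * (|Real.sin ((x+y)/2)| * |Real.sin ((x-y)/2)|) := by
        rw [abs_mul, abs_mul]; norm_num; ring
    _ ≤ 2 * (1 * (|x - y|/2)) := by gcongr
    _ = |x - y| := by ring

lemma one_sub_cos (x : ℝ) : |1 - Real.cos x| ≤ x^2 / 2 := by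
  rw [_root_.abs_of_nonneg (by nlinarith [Real.cos_le_one x])]
  nlinarith [Real.one_sub_sq_div_two_le_cos (x := x)]

lemma contInt (u : ℝ) : IntervalIntegrable (fun t => Real.cos (Real.pi * u * t))
    MeasureTheory.volume 0 1 :=
  (Real.continuous_cos.comp (continuous_const.mul continuous_id)).intervalIntegrable 0 1

lemma sinc_eq_integral (u : ℝ) :
    ModelSets.sinc u = ∫ t in (0:ℝ)..1, Real.cos (Real.pi * u * t) := by
  rcases eq_or_ne u 0 with h | h
  · simp [ModelSets.sinc, h]
  · have hc : Real.pi * u ≠ 0 := mul_ne_zero Real.pi_ne_zero h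
    rw [ModelSets.sinc, if_neg h]
    have h2 := intervalIntegral.integral_comp_mul_left (a := (0:ℝ)) (b := 1)
      (fun x => Real.cos x) hc
    simp only [mul_zero, mul_one] at h2
    rw [h2, integral_cos]
    simp [div_eq_inv_mul]

lemma sinc_abs_le_one (u : ℝ) : |ModelSets.sinc u| ≤ 1 := by
  rw [sinc_eq_integral]
  have := intervalIntegral.norm_integral_le_of_norm_le_const
    (a := (0:ℝ)) (b := 1) (C := 1) (f := fun t => Real.cos (Real.pi * u * t))
    (fun x _ => by simpa using Real.abs_cos_le_one _)
  simpa using this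

lemma sinc_lip (u v : ℝ) : |ModelSets.sinc u - ModelSets.sinc v| ≤ Real.pi * |u - v| := by
  rw [sinc_eq_integral u, sinc_eq_integral v,
    ← intervalIntegral.integral_sub (contInt u) (contInt v)]
  have := intervalIntegral.norm_integral_le_of_norm_le_const
    (a := (0:ℝ)) (b := 1) (C := Real.pi * |u - v|)
    (f := fun t => Real.cos (Real.pi * u * t) - Real.cos (Real.pi * v * t)) ?_
  · simpa using this
  · intro x hx
    rw [Set.uIoc_of_le (by norm_num)] at hx
    have hx1 : |x| ≤ 1 := by rw [abs_le]; exact ⟨by linarith [hx.1], hx.2⟩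
    calc ‖Real.cos (Real.pi * u * x) - Real.cos (Real.pi * v * x)‖
        ≤ |Real.pi * u * x - Real.pi * v * x| := cos_dist _ _
      _ = Real.pi * |u - v| * |x| := by
          rw [show Real.pi * u * x - Real.pi * v * x = Real.pi * (u - v) * x by ring,
            abs_mul, abs_mul, _root_.abs_of_nonneg Real.pi_pos.le]
      _ ≤ Real.pi * |u - v| * 1 := by gcongr
      _ = Real.pi * |u - v| := by ring

lemma one_sub_sinc (u : ℝ) : |1 - ModelSets.sinc u| ≤ Real.pi^2 * u^2 / 2 := by
  have key : ∫ t in (0:ℝ)..1, (1 - Real.cos (Real.pi * u * t)) = 1 - ModelSets.sinc u := by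
    rw [intervalIntegral.integral_sub intervalIntegrable_const (contInt u),
      sinc_eq_integral]
    simp
  rw [← key]
  have := intervalIntegral.norm_integral_le_of_norm_le_const
    (a := (0:ℝ)) (b := 1) (C := Real.pi^2 * u^2 / 2)
    (f := fun t => 1 - Real.cos (Real.pi * u * t)) ?_
  · simpa using this
  · intro x hx
    rw [Set.uIoc_of_le (by norm_num)] at hx
    have hx2 : x^2 ≤ 1 := by nlinarith [hx.1, hx.2]
    calc ‖1 - Real.cos (Real.pi * u * x)‖ ≤ (Real.pi * u * x)^2/2 := one_sub_cos _
      _ ≤ Real.pi^2 * u^2 / 2 := by nlinarith [sq_nonneg (Real.pi * u)]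

lemma sinc_abs_le_inv (u : ℝ) (h : u ≠ 0) : |ModelSets.sinc u| ≤ (Real.pi * |u|)⁻¹ := by
  rw [ModelSets.sinc, if_neg h, abs_div, abs_mul, _root_.abs_of_nonneg Real.pi_pos.le]
  have hpos : (0:ℝ) < Real.pi * |u| := by positivity
  calc |Real.sin (Real.pi * u)| / (Real.pi * |u|) ≤ 1 / (Real.pi * |u|) := by
        gcongr; exact Real.abs_sin_le_one _
    _ = (Real.pi * |u|)⁻¹ := one_div _

lemma abs_prod_le_one {f : ℕ → ℝ} (h : ∀ i, |f i| ≤ 1) (s : Finset ℕ) :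
    |∏ i ∈ s, f i| ≤ 1 := by
  rw [Finset.abs_prod]
  exact Finset.prod_le_one (fun i _ => abs_nonneg _) (fun i _ => h i)

lemma prod_sub_one_abs {f : ℕ → ℝ} (h : ∀ i, |f i| ≤ 1) (s : Finset ℕ) :
    |(∏ i ∈ s, f i) - 1| ≤ ∑ i ∈ s, |f i - 1| := by
  classical
  induction s using Finset.induction_on with
  | empty => simp
  | insert a s hnotmem ih =>
    rw [Finset.prod_insert hnotmem, Finset.sum_insert hnotmem]
    calc |f a * ∏ i ∈ s, f i - 1|
        = |f a * ((∏ i ∈ s, f i) - 1) + (f a - 1)| := by ring_nf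
      _ ≤ |f a| * |(∏ i ∈ s, f i) - 1| + |f a - 1| := by
          rw [← abs_mul]; exact abs_add_le _ _
      _ ≤ 1 * (∑ i ∈ s, |f i - 1|) + |f a - 1| := by
          apply add_le_add _ le_rfl
          exact mul_le_mul (h a) ih (abs_nonneg _) zero_le_one
      _ = |f a - 1| + ∑ i ∈ s, |f i - 1| := by ring

lemma multipliable_of_abs_le_one {f : ℕ → ℝ} (h1 : ∀ i, |f i| ≤ 1)
    (h2 : Summable fun i => |f i - 1|) : Multipliable f := by
  classical
  have hc : CauchySeq (fun s : Finset ℕ => ∏ b ∈ s, f b) := by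
    rw [Metric.cauchySeq_iff]
    intro d hd
    obtain ⟨N, hN⟩ := summable_iff_vanishing.1 h2 (Metric.ball 0 (d/2))
      (Metric.ball_mem_nhds 0 (by linarith))
    refine ⟨N, fun s hs t ht => ?_⟩
    have key : ∀ u : Finset ℕ, N ⊆ u → |(∏ b ∈ u, f b) - ∏ b ∈ N, f b| < d/2 := by
      intro u hu
      rw [← Finset.prod_sdiff hu]
      have h3 : |(∏ b ∈ u \ N, f b) - 1| ≤ ∑ b ∈ u \ N, |f b - 1| :=
        prod_sub_one_abs h1 _
      have h4 : ∑ b ∈ u \ N, |f b - 1| < d/2 := by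
        have := hN (u \ N) Finset.sdiff_disjoint
        rw [Metric.mem_ball, Real.dist_eq, sub_zero] at this
        exact lt_of_le_of_lt (le_abs_self _) this
      calc |(∏ b ∈ u \ N, f b) * (∏ b ∈ N, f b) - (∏ b ∈ N, f b)|
          = |∏ b ∈ N, f b| * |(∏ b ∈ u \ N, f b) - 1| := by
            rw [← abs_mul]; congr 1; ring
        _ ≤ 1 * (∑ b ∈ u \ N, |f b - 1|) :=
            mul_le_mul (abs_prod_le_one h1 _) h3 (abs_nonneg _) zero_le_one
        _ < d/2 := by linarith
    have h5 := key s hs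
    have h6 := key t ht
    rw [Real.dist_eq]
    calc |(∏ b ∈ s, f b) - ∏ b ∈ t, f b|
        ≤ |(∏ b ∈ s, f b) - ∏ b ∈ N, f b| + |(∏ b ∈ N, f b) - ∏ b ∈ t, f b| :=
          abs_sub_le _ _ _
      _ < d := by
          rw [abs_sub_comm (∏ b ∈ N, f b)]
          linarith
  obtain ⟨x, hx⟩ := cauchySeq_tendsto_of_complete hc
  exact ⟨x, hx⟩

lemma abs_tprod_le_one {f : ℕ → ℝ} (h1 : ∀ i, |f i| ≤ 1) (hm : Multipliable f) :
    |∏' i, f i| ≤ 1 := by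
  have ht : Filter.Tendsto (fun s : Finset ℕ => |∏ b ∈ s, f b|) Filter.atTop
      (nhds |∏' i, f i|) := (_root_.continuous_abs.tendsto _).comp hm.hasProd
  exact le_of_tendsto ht (Filter.Eventually.of_forall fun s => abs_prod_le_one h1 s)

lemma abs_tprod_sub_one {f : ℕ → ℝ} (h1 : ∀ i, |f i| ≤ 1)
    (h2 : Summable fun i => |f i - 1|) :
    |(∏' i, f i) - 1| ≤ ∑' i, |f i - 1| := by
  have hm := multipliable_of_abs_le_one h1 h2
  have ht : Filter.Tendsto (fun s : Finset ℕ => |(∏ b ∈ s, f b) - 1|) Filter.atTop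
      (nhds |(∏' i, f i) - 1|) :=
    (_root_.continuous_abs.tendsto _).comp ((hm.hasProd.sub_const 1))
  refine le_of_tendsto ht (Filter.Eventually.of_forall fun s => ?_)
  exact (prod_sub_one_abs h1 s).trans (Summable.sum_le_tsum s (fun i _ => abs_nonneg _) h2)


end Statement10Aux

open Statement10Aux


set_option maxHeartbeats 1000000 in
/-- For `0 < ε < 1`, `a > 0`, `Ω = [-a,a]`, `Ω_n = (1-ε^n)Ω`, the
infinite products `ψ̂_n(t) = Π_{s=0}^∞ sinc(t ε^{ns} |Ω_n|)` all converge, and the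
sequence `ψ̂_n` converges uniformly on `ℝ` to `t ↦ sinc(2at)`, which is `|Ω|⁻¹` times
the Fourier transform of the indicator of `Ω`. -/
theorem statement10 (ε a : ℝ) (hε0 : 0 < ε) (hε1 : ε < 1) (ha : 0 < a) :
    (∀ n : ℕ, 1 ≤ n → ∀ t : ℝ,
      Multipliable fun s : ℕ => sinc (t * (ε ^ (n * s) * (2 * a * (1 - ε ^ n))))) ∧
    TendstoUniformly
      (fun (n : ℕ) (t : ℝ) => ∏' s : ℕ, sinc (t * (ε ^ (n * s) * (2 * a * (1 - ε ^ n)))))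
      (fun t : ℝ => sinc (2 * a * t)) atTop ∧
    (∀ t : ℝ, (sinc (2 * a * t) : ℂ) =
      ((2 * a)⁻¹ : ℂ) * FT1 ((Set.Icc (-a) a).indicator fun _ => (1 : ℝ)) t) := by
  have hπ := Real.pi_pos
  -- summability of `|factor - 1|`, with an explicit geometric bound
  have hptwise : ∀ (n : ℕ) (t c : ℝ) (s : ℕ),
      |sinc (t * (ε ^ (n * (s + 1)) * c)) - 1|
        ≤ (Real.pi ^ 2 * t ^ 2 * c ^ 2 * (ε ^ n) ^ 2 / 2) * ((ε ^ n) ^ 2) ^ s := by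
    intro n t c s
    have e1 : (t * (ε ^ (n * (s + 1)) * c)) ^ 2
        = (t ^ 2 * c ^ 2 * (ε ^ n) ^ 2) * ((ε ^ n) ^ 2) ^ s := by
      rw [pow_mul, pow_right_comm]
      ring
    calc |sinc (t * (ε ^ (n * (s + 1)) * c)) - 1|
        = |1 - sinc (t * (ε ^ (n * (s + 1)) * c))| := abs_sub_comm _ _
      _ ≤ Real.pi ^ 2 * (t * (ε ^ (n * (s + 1)) * c)) ^ 2 / 2 := one_sub_sinc _
      _ = (Real.pi ^ 2 * t ^ 2 * c ^ 2 * (ε ^ n) ^ 2 / 2) * ((ε ^ n) ^ 2) ^ s := by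
          rw [e1]; ring
  have hr1 : ∀ n : ℕ, 1 ≤ n → (ε ^ n) ^ 2 < 1 := by
    intro n hn
    have := pow_lt_one₀ hε0.le hε1 (n := n) (by omega)
    nlinarith [pow_pos hε0 n]
  have hsumm : ∀ (n : ℕ), 1 ≤ n → ∀ (t c : ℝ),
      Summable fun s : ℕ => |sinc (t * (ε ^ (n * s) * c)) - 1| := by
    intro n hn t c
    rw [← summable_nat_add_iff 1]
    apply Summable.of_nonneg_of_le (fun s => abs_nonneg _) (fun s => hptwise n t c s)
    exact (summable_geometric_of_lt_one (by positivity) (hr1 n hn)).mul_left _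
  have part1 : ∀ n : ℕ, 1 ≤ n → ∀ t : ℝ,
      Multipliable fun s : ℕ => sinc (t * (ε ^ (n * s) * (2 * a * (1 - ε ^ n)))) := by
    intro n hn t
    exact multipliable_of_abs_le_one (fun s => sinc_abs_le_one _) (hsumm n hn t _)
  refine ⟨part1, ?_, ?_⟩
  · -- uniform convergence
    rw [Metric.tendstoUniformly_iff]
    intro δ hδ
    set T : ℝ := (a * δ)⁻¹ with hT
    have hT0 : 0 < T := by positivity
    set C1 : ℝ := Real.pi ^ 2 * T ^ 2 * (2 * a) ^ 2 * (1 - ε ^ 2)⁻¹ / 2 with hC1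
    set C2 : ℝ := 2 * Real.pi * a * T with hC2
    have hε2 : ε ^ 2 < 1 := by nlinarith
    have hC10 : 0 ≤ C1 := by
      have : 0 < 1 - ε ^ 2 := by linarith
      positivity
    have hC20 : 0 ≤ C2 := by positivity
    have hlim : Tendsto (fun n : ℕ => C1 * (ε ^ 2) ^ n + C2 * ε ^ n) atTop (𝓝 0) := by
      have l1 := (tendsto_pow_atTop_nhds_zero_of_lt_one (by positivity) hε2).const_mul C1
      have l2 := (tendsto_pow_atTop_nhds_zero_of_lt_one hε0.le hε1).const_mul C2
      simpa using l1.add l2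
    have ev1 : ∀ᶠ n : ℕ in atTop, C1 * (ε ^ 2) ^ n + C2 * ε ^ n < δ :=
      hlim.eventually (gt_mem_nhds hδ)
    have ev2 : ∀ᶠ n : ℕ in atTop, ε ^ n < 1 / 2 :=
      (tendsto_pow_atTop_nhds_zero_of_lt_one hε0.le hε1).eventually
        (gt_mem_nhds (by norm_num))
    filter_upwards [ev1, ev2, eventually_ge_atTop 1] with n h1 h2 h3
    intro t
    have hεn0 : (0 : ℝ) < ε ^ n := pow_pos hε0 n
    have hεn1 : ε ^ n < 1 := by linarith
    have hεnε : ε ^ n ≤ ε := by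
      calc ε ^ n ≤ ε ^ 1 := pow_le_pow_of_le_one hε0.le hε1.le h3
        _ = ε := pow_one ε
    set c : ℝ := 2 * a * (1 - ε ^ n) with hc
    have hc0 : 0 < c := by rw [hc]; nlinarith
    have hca : a ≤ c := by rw [hc]; nlinarith
    have hc2a : c ≤ 2 * a := by rw [hc]; nlinarith
    set g : ℕ → ℝ := fun s => sinc (t * (ε ^ (n * s) * c)) with hg
    have habs : ∀ s, |g s| ≤ 1 := fun s => sinc_abs_le_one _
    have hsum : Summable fun s : ℕ => |g s - 1| := hsumm n h3 t c
    have hsum' : Summable fun s : ℕ => |g (s + 1) - 1| :=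
      (summable_nat_add_iff 1).2 hsum
    have hm' : Multipliable fun s : ℕ => g (s + 1) :=
      multipliable_of_abs_le_one (fun s => habs _) hsum'
    have hsplit : (∏' s : ℕ, g s) = g 0 * ∏' s : ℕ, g (s + 1) := tprod_eq_zero_mul' hm'
    have hg0 : g 0 = sinc (t * c) := by simp [hg]
    have hP1 : |∏' s : ℕ, g (s + 1)| ≤ 1 := abs_tprod_le_one (fun s => habs _) hm'
    have hPsub : |(∏' s : ℕ, g (s + 1)) - 1| ≤ ∑' s : ℕ, |g (s + 1) - 1| :=
      abs_tprod_sub_one (fun s => habs _) hsum'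
    rw [Real.dist_eq, abs_sub_comm]
    rcases le_or_gt (|t|) T with hcase | hcase
    · -- interior case
      have htsum : (∑' s : ℕ, |g (s + 1) - 1|) ≤ C1 * (ε ^ 2) ^ n := by
        have step1 : (∑' s : ℕ, |g (s + 1) - 1|)
            ≤ ∑' s : ℕ, (Real.pi ^ 2 * t ^ 2 * c ^ 2 * (ε ^ n) ^ 2 / 2) * ((ε ^ n) ^ 2) ^ s := by
          apply Summable.tsum_le_tsum (fun s => hptwise n t c s) hsum'
          exact (summable_geometric_of_lt_one (by positivity) (hr1 n h3)).mul_left _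
        have step2 : (∑' s : ℕ, (Real.pi ^ 2 * t ^ 2 * c ^ 2 * (ε ^ n) ^ 2 / 2) * ((ε ^ n) ^ 2) ^ s)
            = (Real.pi ^ 2 * t ^ 2 * c ^ 2 * (ε ^ n) ^ 2 / 2) * (1 - (ε ^ n) ^ 2)⁻¹ := by
          rw [tsum_mul_left, tsum_geometric_of_lt_one (by positivity) (hr1 n h3)]
        have hinv : (1 - (ε ^ n) ^ 2)⁻¹ ≤ (1 - ε ^ 2)⁻¹ := by
          apply inv_anti₀ (by nlinarith)
          nlinarith
        have ht2 : t ^ 2 ≤ T ^ 2 := by nlinarith [abs_nonneg t, _root_.sq_abs t]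
        have hc2 : c ^ 2 ≤ (2 * a) ^ 2 := by nlinarith
        have hpow : (ε ^ n) ^ 2 = (ε ^ 2) ^ n := pow_right_comm ε n 2
        calc (∑' s : ℕ, |g (s + 1) - 1|)
            ≤ (Real.pi ^ 2 * t ^ 2 * c ^ 2 * (ε ^ n) ^ 2 / 2) * (1 - (ε ^ n) ^ 2)⁻¹ := by
              rw [← step2]; exact step1
          _ ≤ (Real.pi ^ 2 * T ^ 2 * (2 * a) ^ 2 * (ε ^ n) ^ 2 / 2) * (1 - ε ^ 2)⁻¹ := by
              have hprod : t ^ 2 * c ^ 2 ≤ T ^ 2 * (2 * a) ^ 2 :=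
                mul_le_mul ht2 hc2 (sq_nonneg c) (by positivity)
              have hinv0 : (0:ℝ) ≤ (1 - (ε ^ n) ^ 2)⁻¹ :=
                inv_nonneg.mpr (by nlinarith)
              apply mul_le_mul _ hinv hinv0 (by positivity)
              calc Real.pi ^ 2 * t ^ 2 * c ^ 2 * (ε ^ n) ^ 2 / 2
                  = (Real.pi ^ 2 * (ε ^ n) ^ 2 / 2) * (t ^ 2 * c ^ 2) := by ring
                _ ≤ (Real.pi ^ 2 * (ε ^ n) ^ 2 / 2) * (T ^ 2 * (2 * a) ^ 2) :=
                    mul_le_mul_of_nonneg_left hprod (by positivity)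
                _ = Real.pi ^ 2 * T ^ 2 * (2 * a) ^ 2 * (ε ^ n) ^ 2 / 2 := by ring
          _ = C1 * (ε ^ 2) ^ n := by rw [hC1, ← hpow]; ring
      have hlip : |sinc (t * c) - sinc (2 * a * t)| ≤ C2 * ε ^ n := by
        calc |sinc (t * c) - sinc (2 * a * t)| ≤ Real.pi * |t * c - 2 * a * t| := sinc_lip _ _
          _ = Real.pi * (|t| * (2 * a * ε ^ n)) := by
              rw [show t * c - 2 * a * t = t * (-(2 * a * ε ^ n)) by rw [hc]; ring,
                abs_mul, abs_neg, _root_.abs_of_nonneg (by positivity : (0:ℝ) ≤ 2 * a * ε ^ n)]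
          _ ≤ Real.pi * (T * (2 * a * ε ^ n)) := by
              apply mul_le_mul_of_nonneg_left _ hπ.le
              apply mul_le_mul_of_nonneg_right hcase (by positivity)
          _ = C2 * ε ^ n := by rw [hC2]; ring
      calc |(∏' s : ℕ, g s) - sinc (2 * a * t)|
          = |g 0 * ((∏' s : ℕ, g (s + 1)) - 1) + (sinc (t * c) - sinc (2 * a * t))| := by
            rw [hsplit, hg0]; congr 1; ring
        _ ≤ |g 0| * |(∏' s : ℕ, g (s + 1)) - 1| + |sinc (t * c) - sinc (2 * a * t)| := by
            rw [← abs_mul]; exact abs_add_le _ _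
        _ ≤ 1 * (C1 * (ε ^ 2) ^ n) + C2 * ε ^ n := by
            apply add_le_add _ hlip
            exact mul_le_mul (habs 0) (hPsub.trans htsum) (abs_nonneg _)
              zero_le_one
        _ < δ := by rw [one_mul]; exact h1
    · -- exterior case
      have ht0 : t ≠ 0 := by
        intro h; rw [h, abs_zero] at hcase; linarith
      have hbound1 : |g 0| ≤ δ / Real.pi := by
        rw [hg0]
        have h1' : |sinc (t * c)| ≤ (Real.pi * |t * c|)⁻¹ :=
          sinc_abs_le_inv _ (mul_ne_zero ht0 hc0.ne')
        have h2' : Real.pi * δ⁻¹ ≤ Real.pi * |t * c| := by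
          apply mul_le_mul_of_nonneg_left _ hπ.le
          rw [abs_mul, _root_.abs_of_nonneg hc0.le]
          calc δ⁻¹ = T * a := by rw [hT]; field_simp
            _ ≤ |t| * c := mul_le_mul hcase.le hca ha.le (abs_nonneg _)
        calc |sinc (t * c)| ≤ (Real.pi * |t * c|)⁻¹ := h1'
          _ ≤ (Real.pi * δ⁻¹)⁻¹ := by
              apply inv_anti₀ (by positivity) h2'
          _ = δ / Real.pi := by field_simp
      have hbound2 : |sinc (2 * a * t)| ≤ δ / (2 * Real.pi) := by
        have h1' : |sinc (2 * a * t)| ≤ (Real.pi * |2 * a * t|)⁻¹ :=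
          sinc_abs_le_inv _ (by positivity)
        have h2' : Real.pi * (2 * δ⁻¹) ≤ Real.pi * |2 * a * t| := by
          apply mul_le_mul_of_nonneg_left _ hπ.le
          rw [show (2:ℝ) * a * t = 2 * (a * t) by ring, abs_mul, abs_mul,
            _root_.abs_of_nonneg (by norm_num : (0:ℝ) ≤ 2), _root_.abs_of_nonneg ha.le]
          have : δ⁻¹ ≤ a * |t| := by
            calc δ⁻¹ = a * T := by rw [hT]; field_simp
              _ ≤ a * |t| := mul_le_mul_of_nonneg_left hcase.le ha.le
          linarith
        calc |sinc (2 * a * t)| ≤ (Real.pi * |2 * a * t|)⁻¹ := h1'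
          _ ≤ (Real.pi * (2 * δ⁻¹))⁻¹ := inv_anti₀ (by positivity) h2'
          _ = δ / (2 * Real.pi) := by
              rw [show Real.pi * (2 * δ⁻¹) = (2 * Real.pi) / δ by field_simp, inv_div]
      calc |(∏' s : ℕ, g s) - sinc (2 * a * t)|
          ≤ |∏' s : ℕ, g s| + |sinc (2 * a * t)| := abs_sub _ _
        _ ≤ |g 0| * |∏' s : ℕ, g (s + 1)| + |sinc (2 * a * t)| := by
            rw [hsplit, abs_mul]
        _ ≤ δ / Real.pi * 1 + δ / (2 * Real.pi) := by
            apply add_le_add _ hbound2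
            exact mul_le_mul hbound1 hP1 (abs_nonneg _) (by positivity)
        _ < δ := by
            rw [mul_one]
            have h3pi := Real.pi_gt_three
            rw [div_add_div _ _ hπ.ne' (by positivity : (2 * Real.pi) ≠ 0)]
            rw [div_lt_iff₀ (by positivity)]
            nlinarith [mul_pos (mul_pos hδ hπ) (show (0:ℝ) < 2 * Real.pi - 3 by linarith)]
  · -- Fourier transform of the indicator
    intro t
    have hind : ∀ x : ℝ,
        ((Set.indicator (Set.Icc (-a) a) (fun _ => (1:ℝ)) x : ℝ) : ℂ) *
          Complex.exp (-(2 * Real.pi * Complex.I) * ((x * t : ℝ) : ℂ))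
        = Set.indicator (Set.Icc (-a) a)
            (fun x : ℝ => Complex.exp (-(2 * Real.pi * Complex.I) * ((x * t : ℝ) : ℂ))) x := by
      intro x
      by_cases hx : x ∈ Set.Icc (-a) a
      · simp [Set.indicator_of_mem hx]
      · simp [Set.indicator_of_notMem hx]
    have hFT : FT1 ((Set.Icc (-a) a).indicator fun _ => (1 : ℝ)) t
        = ∫ x in (-a)..a, Complex.exp (-(2 * Real.pi * Complex.I) * ((x * t : ℝ) : ℂ)) := by
      rw [FT1]
      rw [intervalIntegral.integral_of_le (by linarith : -a ≤ a),
        ← MeasureTheory.integral_Icc_eq_integral_Ioc]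
      rw [← MeasureTheory.integral_indicator measurableSet_Icc]
      exact congrArg _ (funext hind)
    rw [hFT]
    rcases eq_or_ne t 0 with ht | ht
    · subst ht
      have haC : (a : ℂ) ≠ 0 := by exact_mod_cast ha.ne'
      simp [sinc_zero, mul_comm]
      norm_num
      field_simp
      ring
    · set cc : ℂ := -(2 * Real.pi * Complex.I * (t : ℂ)) with hcc
      have hπC : (Real.pi : ℂ) ≠ 0 := by exact_mod_cast Real.pi_ne_zero
      have htC : (t : ℂ) ≠ 0 := by exact_mod_cast ht
      have haC : (a : ℂ) ≠ 0 := by exact_mod_cast ha.ne'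
      have hcc0 : cc ≠ 0 := by
        rw [hcc]
        exact neg_ne_zero.mpr (mul_ne_zero (mul_ne_zero (mul_ne_zero two_ne_zero hπC)
          Complex.I_ne_zero) htC)
      have hexp : ∀ x : ℝ, Complex.exp (-(2 * Real.pi * Complex.I) * ((x * t : ℝ) : ℂ))
          = Complex.exp (cc * (x : ℂ)) := by
        intro x; congr 1; rw [hcc]; push_cast; ring
      rw [intervalIntegral.integral_congr (fun x _ => hexp x)]
      rw [integral_exp_mul_complex hcc0]
      have key : Complex.exp (cc * (a : ℂ)) - Complex.exp (cc * ((-a : ℝ) : ℂ))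
          = -2 * Complex.I * Complex.sin ((Real.pi * (2 * a * t) : ℝ) : ℂ) := by
        have e1 : cc * (a : ℂ) = -(((Real.pi * (2 * a * t) : ℝ) : ℂ)) * Complex.I := by
          rw [hcc]; push_cast; ring
        have e2 : cc * ((-a : ℝ) : ℂ) = (((Real.pi * (2 * a * t) : ℝ) : ℂ)) * Complex.I := by
          rw [hcc]; push_cast; ring
        rw [e1, e2]
        rw [show -(((Real.pi * (2 * a * t) : ℝ) : ℂ)) * Complex.I
            = (-((Real.pi * (2 * a * t) : ℝ) : ℂ)) * Complex.I by ring]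
        rw [Complex.exp_mul_I, Complex.exp_mul_I, Complex.cos_neg, Complex.sin_neg]
        ring
      rw [key]
      have h2at : (2 : ℝ) * a * t ≠ 0 := by
        intro h
        rcases mul_eq_zero.1 h with h' | h'
        · rcases mul_eq_zero.1 h' with h'' | h'' <;> [norm_num at h''; exact ha.ne' h'']
        · exact ht h'
      rw [ModelSets.sinc, if_neg h2at]
      rw [hcc]
      have hdiv : (-2 * Complex.I * Complex.sin (((Real.pi * (2 * a * t) : ℝ)) : ℂ)) /
            (-(2 * (Real.pi : ℂ) * Complex.I * (t : ℂ)))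
          = Complex.sin (((Real.pi * (2 * a * t) : ℝ)) : ℂ) / ((Real.pi : ℂ) * (t : ℂ)) := by
        rw [div_eq_div_iff (by
            exact neg_ne_zero.mpr (mul_ne_zero (mul_ne_zero (mul_ne_zero two_ne_zero hπC)
              Complex.I_ne_zero) htC)) (mul_ne_zero hπC htC)]
        ring
      rw [hdiv, Complex.ofReal_div, Complex.ofReal_sin]
      set S : ℂ := Complex.sin (((Real.pi * (2 * a * t) : ℝ)) : ℂ) with hS
      push_cast
      field_simp
      try ring
      try exact Or.inl trivial
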